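/- arXiv:2210.13040 — 2 statements merged into one kernel-verified Lean document; each statement's English description precedes it below -/
import Mathlib

section
/- Monotonic decrease of the forward-backward sweep: in the discrete-time finite-state control problem, suppose the sweep updates controls sequentially: at each time $t$ (in any order covering $0,\dots,T-dt$), $u_t^{k+1}$ is chosen to minimize $u \mapsto \sum_s p_t(s)\,(f(t,s,u) + \sum_{s'}P_u(s,s')w_{t+dt}(s'))$ where $p_t$ is computed from the already-updated controls $u_{0:t-dt}^{k+1}$ and $w_{t+dt}$ from the not-yet-updated controls $u_{t+dt:T-dt}^{k}$. Then the cost is non-increasing at each update: $J[u_{0:t}^{k+1}, u_{t+dt:T-dt}^{k}] \le J[u_{0:t-dt}^{k+1}, u_{t:T-dt}^{k}]$, and hence $J[u_{0:T-dt}^{k+1}] \le J[u_{0:T-dt}^{k}]$. -/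
open Finset

/-- Forward state distribution at time `t` induced by `p0` and the controls `u`. -/
def pF {S U : Type} [Fintype S] (P : U → S → S → ℝ) (p0 : S → ℝ)
    (u : ℕ → U) : ℕ → S → ℝ
  | 0 => p0
  | (t+1) => fun s' => ∑ s : S, pF P p0 u t s * P (u t) s s'

/-- Backward value function, indexed by the number `k` of remaining steps. -/
def wAux {S U : Type} [Fintype S] (P : U → S → S → ℝ)
    (f : ℕ → S → U → ℝ) (g : S → ℝ) (N : ℕ) (u : ℕ → U) : ℕ → S → ℝ
  | 0 => g
  | (k+1) => fun s =>
      f (N - (k+1)) s (u (N - (k+1)))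
        + ∑ s' : S, P (u (N - (k+1))) s s' * wAux P f g N u k s'

/-- Backward value function at time `t`, with `w_N = g`. -/
def wVal {S U : Type} [Fintype S] (P : U → S → S → ℝ)
    (f : ℕ → S → U → ℝ) (g : S → ℝ) (N : ℕ) (u : ℕ → U) (t : ℕ) : S → ℝ :=
  wAux P f g N u (N - t)

/-- Total expected cost. -/
def Jval {S U : Type} [Fintype S] (P : U → S → S → ℝ) (p0 : S → ℝ)
    (f : ℕ → S → U → ℝ) (g : S → ℝ) (N : ℕ) (u : ℕ → U) : ℝ :=
  (∑ t ∈ Finset.range N, ∑ s : S, pF P p0 u t s * f t s (u t))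
    + ∑ s : S, pF P p0 u N s * g s

/-- Hybrid control sequence of the sweep: updated controls `uNew` before time `t`,
old controls `uOld` from time `t` onward. -/
def hyb {U : Type} (uOld uNew : ℕ → U) (t : ℕ) : ℕ → U :=
  fun τ => if τ < t then uNew τ else uOld τ

lemma pF_congr {S U : Type} [Fintype S] (P : U → S → S → ℝ) (p0 : S → ℝ)
    (u u' : ℕ → U) (t : ℕ) (h : ∀ τ < t, u τ = u' τ) :
    pF P p0 u t = pF P p0 u' t := by
  induction t with
  | zero => rfl
  | succ t ih =>
    have h1 : ∀ τ < t, u τ = u' τ := fun τ hτ => h τ (Nat.lt_succ_of_lt hτ)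
    funext s'
    simp only [pF, ih h1, h t (Nat.lt_succ_self t)]

lemma wAux_congr {S U : Type} [Fintype S] (P : U → S → S → ℝ)
    (f : ℕ → S → U → ℝ) (g : S → ℝ) (N : ℕ) (u u' : ℕ → U) (k : ℕ)
    (h : ∀ τ, N - k ≤ τ → u τ = u' τ) :
    wAux P f g N u k = wAux P f g N u' k := by
  induction k with
  | zero => rfl
  | succ k ih =>
    have h1 : ∀ τ, N - k ≤ τ → u τ = u' τ := fun τ hτ =>
      h τ (le_trans (Nat.sub_le_sub_left (Nat.le_succ k) N) hτ)
    funext s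
    simp only [wAux, ih h1, h (N - (k+1)) le_rfl]

lemma collapse {S : Type} [Fintype S] (p : S → ℝ) (a : S → ℝ) (Q : S → S → ℝ) (w : S → ℝ) :
    (∑ s : S, p s * a s) + ∑ s' : S, (∑ s : S, p s * Q s s') * w s'
    = ∑ s : S, p s * (a s + ∑ s' : S, Q s s' * w s') := by
  simp only [mul_add, Finset.sum_add_distrib, Finset.mul_sum, Finset.sum_mul, mul_assoc]
  rw [Finset.sum_comm]

lemma Jval_decomp {S U : Type} [Fintype S] (P : U → S → S → ℝ) (p0 : S → ℝ)
    (f : ℕ → S → U → ℝ) (g : S → ℝ) (N : ℕ) (u : ℕ → U) (k : ℕ) (hk : k ≤ N) :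
    Jval P p0 f g N u =
      (∑ t ∈ Finset.range (N - k), ∑ s : S, pF P p0 u t s * f t s (u t))
        + ∑ s : S, pF P p0 u (N - k) s * wAux P f g N u k s := by
  induction k with
  | zero => simp [Jval, wAux]
  | succ k ih =>
    have hk' : k ≤ N := Nat.le_of_succ_le hk
    have ht : N - k = (N - (k+1)) + 1 := by omega
    rw [ih hk', ht, Finset.sum_range_succ]
    set t := N - (k+1) with htdef
    have hw : ∀ s, wAux P f g N u (k+1) s
        = f t s (u t) + ∑ s' : S, P (u t) s s' * wAux P f g N u k s' := fun s => rfl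
    have hpf : ∀ s', pF P p0 u (t+1) s' = ∑ s : S, pF P p0 u t s * P (u t) s s' :=
      fun s' => rfl
    simp only [hw, hpf]
    rw [← collapse]
    ring

lemma Jval_congr {S U : Type} [Fintype S] (P : U → S → S → ℝ) (p0 : S → ℝ)
    (f : ℕ → S → U → ℝ) (g : S → ℝ) (N : ℕ) (u u' : ℕ → U)
    (h : ∀ τ < N, u τ = u' τ) :
    Jval P p0 f g N u = Jval P p0 f g N u' := by
  unfold Jval
  congr 1
  · refine Finset.sum_congr rfl fun τ hτ => ?_
    have hτ' := Finset.mem_range.mp hτ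
    rw [pF_congr P p0 u u' τ (fun τ' h' => h τ' (h'.trans hτ')), h τ hτ']
  · rw [pF_congr P p0 u u' N h]

theorem fbsm_monotone_decrease
    {S U : Type} [Fintype S]
    (P : U → S → S → ℝ)
    (hPnonneg : ∀ u s s', 0 ≤ P u s s')
    (hPsum : ∀ u s, ∑ s' : S, P u s s' = 1)
    (p0 : S → ℝ) (hp0nonneg : ∀ s, 0 ≤ p0 s) (hp0sum : ∑ s : S, p0 s = 1)
    (f : ℕ → S → U → ℝ) (g : S → ℝ) (N : ℕ)
    (uk uk1 : ℕ → U)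
    -- at each step, the updated control minimizes the expected Hamiltonian,
    -- with `p_t` computed from the already-updated controls and `w_{t+dt}`
    -- from the not-yet-updated controls
    (hmin : ∀ t < N, ∀ v : U,
      (∑ s : S, pF P p0 (hyb uk uk1 t) t s *
        (f t s (uk1 t) + ∑ s' : S, P (uk1 t) s s' * wVal P f g N uk (t+1) s'))
      ≤ ∑ s : S, pF P p0 (hyb uk uk1 t) t s *
        (f t s v + ∑ s' : S, P v s s' * wVal P f g N uk (t+1) s')) :
    (∀ t < N,
      Jval P p0 f g N (hyb uk uk1 (t+1)) ≤ Jval P p0 f g N (hyb uk uk1 t)) ∧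
    Jval P p0 f g N uk1 ≤ Jval P p0 f g N uk := by
  have step : ∀ t < N,
      Jval P p0 f g N (hyb uk uk1 (t+1)) ≤ Jval P p0 f g N (hyb uk uk1 t) := by
    intro t ht
    set u1 := hyb uk uk1 (t+1) with hu1
    set u0 := hyb uk uk1 t with hu0
    have hk : N - (t+1) ≤ N := Nat.sub_le _ _
    have hNk : N - (N - (t+1)) = t + 1 := by omega
    have hd1 := Jval_decomp P p0 f g N u1 (N-(t+1)) hk
    have hd0 := Jval_decomp P p0 f g N u0 (N-(t+1)) hk
    rw [hNk] at hd1 hd0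
    have hw1 : wAux P f g N u1 (N-(t+1)) = wAux P f g N uk (N-(t+1)) := by
      apply wAux_congr
      intro τ hτ
      rw [hNk] at hτ
      simp [hu1, hyb, Nat.not_lt.mpr hτ]
    have hw0 : wAux P f g N u0 (N-(t+1)) = wAux P f g N uk (N-(t+1)) := by
      apply wAux_congr
      intro τ hτ
      rw [hNk] at hτ
      have : ¬ τ < t := by omega
      simp [hu0, hyb, this]
    have hpagree : ∀ τ ≤ t, pF P p0 u1 τ = pF P p0 u0 τ := by
      intro τ hτ
      apply pF_congr
      intro τ' hτ'
      have h1 : τ' < t := lt_of_lt_of_le hτ' hτ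
      simp [hu0, hu1, hyb, h1, Nat.lt_succ_of_lt h1]
    have hu1t : u1 t = uk1 t := by simp [hu1, hyb]
    have hu0t : u0 t = uk t := by simp [hu0, hyb]
    have hrun : ∀ τ ∈ Finset.range t,
        (∑ s : S, pF P p0 u1 τ s * f τ s (u1 τ))
          = ∑ s : S, pF P p0 u0 τ s * f τ s (u0 τ) := by
      intro τ hτ
      have hτ' := Finset.mem_range.mp hτ
      have he : u1 τ = u0 τ := by
        simp [hu1, hu0, hyb, hτ', Nat.lt_succ_of_lt hτ']
      rw [hpagree τ (le_of_lt hτ'), he]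
    have hpF1 : ∀ s', pF P p0 u1 (t+1) s'
        = ∑ s : S, pF P p0 u0 t s * P (uk1 t) s s' := by
      intro s'
      show (∑ s : S, pF P p0 u1 t s * P (u1 t) s s') = _
      rw [hpagree t le_rfl, hu1t]
    have hpF0 : ∀ s', pF P p0 u0 (t+1) s'
        = ∑ s : S, pF P p0 u0 t s * P (uk t) s s' := by
      intro s'
      show (∑ s : S, pF P p0 u0 t s * P (u0 t) s s') = _
      rw [hu0t]
    rw [hd1, hd0, hw1, hw0, Finset.sum_range_succ, Finset.sum_range_succ,
      Finset.sum_congr rfl hrun]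
    simp only [hpF1, hpF0, hu1t, hu0t, hpagree t le_rfl]
    rw [add_assoc, add_assoc, collapse, collapse]
    have := hmin t ht (uk t)
    simp only [wVal] at this
    exact add_le_add_right this _
  refine ⟨step, ?_⟩
  have h0 : hyb uk uk1 0 = uk := by
    funext τ; simp [hyb]
  have hN : Jval P p0 f g N (hyb uk uk1 N) = Jval P p0 f g N uk1 := by
    apply Jval_congr
    intro τ hτ
    simp [hyb, hτ]
  have chain : ∀ k ≤ N, Jval P p0 f g N (hyb uk uk1 k) ≤ Jval P p0 f g N uk := by
    intro k
    induction k with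
    | zero => intro _; rw [h0]
    | succ k ih =>
      intro hk
      exact le_trans (step k (Nat.lt_of_succ_le hk)) (ih (Nat.le_of_succ_le hk))
  calc Jval P p0 f g N uk1 = Jval P p0 f g N (hyb uk uk1 N) := hN.symm
    _ ≤ Jval P p0 f g N uk := chain N le_rfl
end

section
/- Discrete J-difference formula (analogue of Lemma on $J[u]-J[u']$ for ML-POSC): in the discrete-time finite-state setting, let $u$ and $u'$ be two control sequences with induced state distributions $p_t$ and $p'_t$ (both starting from the same $p_0$), and let $w'_t$ be the value function of $u'$ (backward recursion with terminal condition $g$). Define the discrete Hamiltonian $\mathcal{H}(t,s,u,w) = f(t,s,u) + \sum_{s'}P_u(s,s')w(s') - w(s)$. Then $J[u]-J[u'] = \sum_{t=0}^{T-dt} \sum_s p_t(s)\big(\mathcal{H}(t,s,u_t,w'_{t+dt}) - \mathcal{H}(t,s,u'_t,w'_{t+dt})\big)$. -/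
open Finset

/-- Discrete Hamiltonian `H(t,s,u,w) = f(t,s,u) + ∑ s' P_u(s,s') w(s') - w(s)`. -/
def Hd {S U : Type} [Fintype S] (P : U → S → S → ℝ) (f : ℕ → S → U → ℝ)
    (t : ℕ) (s : S) (v : U) (w : S → ℝ) : ℝ :=
  f t s v + (∑ s' : S, P v s s' * w s') - w s

lemma wVal_rec {S U : Type} [Fintype S] (P : U → S → S → ℝ)
    (f : ℕ → S → U → ℝ) (g : S → ℝ) (N : ℕ) (u : ℕ → U) {t : ℕ} (ht : t < N) (s : S) :
    wVal P f g N u t s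
      = f t s (u t) + ∑ s' : S, P (u t) s s' * wVal P f g N u (t+1) s' := by
  unfold wVal
  have h1 : N - t = (N - (t+1)) + 1 := by omega
  have h2 : N - ((N - (t+1)) + 1) = t := by omega
  rw [h1]
  simp only [wAux, h2]

lemma wVal_top {S U : Type} [Fintype S] (P : U → S → S → ℝ)
    (f : ℕ → S → U → ℝ) (g : S → ℝ) (N : ℕ) (u : ℕ → U) :
    wVal P f g N u N = g := by
  unfold wVal
  simp [wAux]

lemma push {S U : Type} [Fintype S] (P : U → S → S → ℝ) (p0 : S → ℝ)
    (u : ℕ → U) (t : ℕ) (w : S → ℝ) :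
    ∑ s' : S, pF P p0 u (t+1) s' * w s'
      = ∑ s : S, pF P p0 u t s * ∑ s' : S, P (u t) s s' * w s' := by
  simp only [pF, Finset.sum_mul, Finset.mul_sum, mul_assoc]
  exact Finset.sum_comm

/-- `⟨p'_0, w'_0⟩ = J[u']`. -/
lemma w0_eq_J {S U : Type} [Fintype S] (P : U → S → S → ℝ) (p0 : S → ℝ)
    (f : ℕ → S → U → ℝ) (g : S → ℝ) (N : ℕ) (u' : ℕ → U) :
    ∑ s : S, p0 s * wVal P f g N u' 0 s = Jval P p0 f g N u' := by
  set W : ℕ → ℝ := fun t => ∑ s : S, pF P p0 u' t s * wVal P f g N u' t s with hW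
  have htel : ∑ t ∈ Finset.range N, (W (t+1) - W t) = W N - W 0 :=
    Finset.sum_range_sub W N
  have hstep : ∀ t ∈ Finset.range N,
      W (t+1) - W t = -(∑ s : S, pF P p0 u' t s * f t s (u' t)) := by
    intro t ht
    rw [Finset.mem_range] at ht
    have : W (t+1) = W t - ∑ s : S, pF P p0 u' t s * f t s (u' t) := by
      simp only [hW]
      rw [push]
      rw [← Finset.sum_sub_distrib]
      apply Finset.sum_congr rfl
      intro s _
      rw [wVal_rec P f g N u' ht s]
      ring
    rw [this]; ring
  rw [Finset.sum_congr rfl hstep] at htel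
  have hWN : W N = ∑ s : S, pF P p0 u' N s * g s := by
    simp only [hW, wVal_top]
  have hW0 : W 0 = ∑ s : S, p0 s * wVal P f g N u' 0 s := by
    simp only [hW, pF]
  rw [Finset.sum_neg_distrib] at htel
  rw [hW0, hWN] at htel
  unfold Jval
  linarith

theorem discrete_J_difference_formula
    {S U : Type} [Fintype S]
    (P : U → S → S → ℝ)
    (hPnonneg : ∀ u s s', 0 ≤ P u s s')
    (hPsum : ∀ u s, ∑ s' : S, P u s s' = 1)
    (p0 : S → ℝ) (hp0nonneg : ∀ s, 0 ≤ p0 s) (hp0sum : ∑ s : S, p0 s = 1)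
    (f : ℕ → S → U → ℝ) (g : S → ℝ) (N : ℕ)
    (u u' : ℕ → U) :
    Jval P p0 f g N u - Jval P p0 f g N u'
      = ∑ t ∈ Finset.range N, ∑ s : S, pF P p0 u t s *
          (Hd P f t s (u t) (wVal P f g N u' (t+1))
            - Hd P f t s (u' t) (wVal P f g N u' (t+1))) := by
  set W : ℕ → ℝ := fun t => ∑ s : S, pF P p0 u t s * wVal P f g N u' t s with hW
  have hstep : ∀ t ∈ Finset.range N,
      ∑ s : S, pF P p0 u t s *
          (Hd P f t s (u t) (wVal P f g N u' (t+1))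
            - Hd P f t s (u' t) (wVal P f g N u' (t+1)))
      = (∑ s : S, pF P p0 u t s * f t s (u t)) + (W (t+1) - W t) := by
    intro t ht
    rw [Finset.mem_range] at ht
    simp only [hW]
    rw [push]
    rw [← Finset.sum_sub_distrib, ← Finset.sum_add_distrib]
    apply Finset.sum_congr rfl
    intro s _
    unfold Hd
    rw [wVal_rec P f g N u' ht s]
    ring
  rw [Finset.sum_congr rfl hstep, Finset.sum_add_distrib, Finset.sum_range_sub W]
  have hWN : W N = ∑ s : S, pF P p0 u N s * g s := by
    simp only [hW, wVal_top]
  have hW0 : W 0 = Jval P p0 f g N u' := by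
    rw [← w0_eq_J P p0 f g N u']
    simp only [hW, pF]
  rw [hWN, hW0]
  unfold Jval
  ring
end
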